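/- Let f, g be nondegenerate real ternary quadratic forms generating a pencil in orbit II or IIa. If the pencil is in orbit II, then p₂ < 0 and Φ₃₀A₁ > 0. If the pencil is in orbit IIa, then p₂ = 0 or Φ₃₀A₁ < 0. -/

import Mathlib

open Matrix Polynomial Set

noncomputable section

/-- Real ternary quadratic forms are represented by their symmetric 3×3 matrices. -/
abbrev RMat := Matrix (Fin 3) (Fin 3) ℝ
abbrev CMat := Matrix (Fin 3) (Fin 3) ℂ

/-- The matrix of the pencil `t f + g`, over the polynomial ring ℝ[t]. -/
def pencilPolyMat (F G : RMat) : Matrix (Fin 3) (Fin 3) (Polynomial ℝ) :=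
  Matrix.of fun i j => Polynomial.C (F i j) * Polynomial.X + Polynomial.C (G i j)

/-- The (de-homogenized) characteristic form `φ(t) = Disc(t f + g)`. -/
def phiP (F G : RMat) : Polynomial ℝ := (pencilPolyMat F G).det

/-- The coefficients of the characteristic form: `ph F G 3 = Φ₃₀`, `ph F G 2 = Φ₂₁`,
`ph F G 1 = Φ₁₂`, `ph F G 0 = Φ₀₃`. -/
def ph (F G : RMat) (k : ℕ) : ℝ := (phiP F G).coeff k

/-- `ψ(t)`: the coefficient of `v` in `det (v·Id − M(tf+g)) = v³ − μ(t)v² + ψ(t)v − φ(t)`. -/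
def psiP (F G : RMat) : Polynomial ℝ := ((pencilPolyMat F G).charpoly).coeff 1

/-- `P`: the remainder of the euclidean division of `Φ₃₀ · ψ · φ′` by `φ`. -/
def Prem (F G : RMat) : Polynomial ℝ :=
  (Polynomial.C (ph F G 3) * psiP F G * derivative (phiP F G)) % (phiP F G)

/-- The coefficients `p₂, p₁, p₀` of `P`. -/
def pc (F G : RMat) (k : ℕ) : ℝ := (Prem F G).coeff k

/-- The principal subresultant coefficient `A₁ = sr₁(φ, P)`. -/
def A1 (F G : RMat) : ℝ :=
  Matrix.det !![ph F G 3, ph F G 2, ph F G 1;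
                0, pc F G 2, pc F G 1;
                pc F G 2, pc F G 1, pc F G 0]

/-- Resultant of a cubic and a quadratic (Sylvester determinant). -/
def syl32 (a3 a2 a1 a0 b2 b1 b0 : ℝ) : ℝ :=
  Matrix.det !![a3,a2,a1,a0,0; 0,a3,a2,a1,a0; b2,b1,b0,0,0; 0,b2,b1,b0,0; 0,0,b2,b1,b0]

/-- Resultant of a quadratic and a cubic (Sylvester determinant). -/
def syl23 (b2 b1 b0 a3 a2 a1 a0 : ℝ) : ℝ :=
  Matrix.det !![b2,b1,b0,0,0; 0,b2,b1,b0,0; 0,0,b2,b1,b0; a3,a2,a1,a0,0; 0,a3,a2,a1,a0]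

/-- `Res(φ, φ′)`. -/
def resPhiDPhi (F G : RMat) : ℝ :=
  syl32 (ph F G 3) (ph F G 2) (ph F G 1) (ph F G 0)
    ((derivative (phiP F G)).coeff 2) ((derivative (phiP F G)).coeff 1)
    ((derivative (phiP F G)).coeff 0)

/-- `Res(ψ, φ)`. -/
def resPsiPhi (F G : RMat) : ℝ :=
  syl23 ((psiP F G).coeff 2) ((psiP F G).coeff 1) ((psiP F G).coeff 0)
    (ph F G 3) (ph F G 2) (ph F G 1) (ph F G 0)

/-- `A₀ = −Res(φ, P) = sr₀(φ, P)`. -/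
def A0 (F G : RMat) : ℝ :=
  - syl32 (ph F G 3) (ph F G 2) (ph F G 1) (ph F G 0) (pc F G 2) (pc F G 1) (pc F G 0)

/-- The discriminant of the characteristic form, `Disc(Φ) = Res(φ,φ′)/(27 Φ₃₀)`. -/
def discPhi (F G : RMat) : ℝ := resPhiDPhi F G / (27 * ph F G 3)

/-- Coefficients of the Hessian determinant `H = H₂₀ t² + H₁₁ t u + H₀₂ u²` of `Φ`. -/
def H20 (F G : RMat) : ℝ := 4 * (3 * ph F G 3 * ph F G 1 - (ph F G 2)^2)
def H11 (F G : RMat) : ℝ := 4 * (9 * ph F G 3 * ph F G 0 - ph F G 2 * ph F G 1)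
def H02 (F G : RMat) : ℝ := 4 * (3 * ph F G 2 * ph F G 0 - (ph F G 1)^2)

/-- The Hessian covariant `H` of `Φ` vanishes identically. -/
def HVanishes (F G : RMat) : Prop := H20 F G = 0 ∧ H11 F G = 0 ∧ H02 F G = 0

/-- `Ω(f,g)`: the middle coefficient of the tangential form of `t f + g`, so that
`adj(tF+G) = adj(F) t² + Ω t + adj(G)`. -/
def OmegaM (F G : RMat) : RMat := (F + G).adjugate - F.adjugate - G.adjugate

/-- The coefficients, in the basis `X², Y², Z², YZ, XZ, XY` of quadratic forms on the dual
space, of the quadratic form with matrix `N`. -/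
def rowOf (N : RMat) : Fin 6 → ℝ := ![N 0 0, N 1 1, N 2 2, 2 * N 1 2, 2 * N 0 2, 2 * N 0 1]

/-- Maximal minors `[ijk]` of the 3×6 matrix `M` of the coefficients of `f̃`, `Ω`, `g̃`;
the columns `1, 2, 3, 1̄, 2̄, 3̄` are indexed `0, 1, 2, 3, 4, 5`. -/
def minorM (F G : RMat) (i j k : Fin 6) : ℝ :=
  Matrix.det !![rowOf F.adjugate i, rowOf F.adjugate j, rowOf F.adjugate k;
                rowOf (OmegaM F G) i, rowOf (OmegaM F G) j, rowOf (OmegaM F G) k;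
                rowOf G.adjugate i, rowOf G.adjugate j, rowOf G.adjugate k]

/-- The ten coefficients (in `x³, y³, z³, xy², xz², x²y, yz², x²z, y²z, xyz`) of the
autopolar triangle covariant `G` of `(f,g)`. -/
def Gcovar (F G : RMat) : Fin 10 → ℝ :=
  ![- minorM F G 3 1 2,
    - minorM F G 0 4 2,
    - minorM F G 0 1 5,
    minorM F G 0 3 2 + 2 * minorM F G 5 4 2,
    minorM F G 0 1 3 + 2 * minorM F G 4 1 5,
    minorM F G 4 1 2 + 2 * minorM F G 3 5 2,
    minorM F G 0 1 4 + 2 * minorM F G 0 3 5,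
    minorM F G 5 1 2 + 2 * minorM F G 3 1 4,
    minorM F G 0 5 2 + 2 * minorM F G 0 4 3,
    minorM F G 0 1 2 + 4 * minorM F G 3 4 5]

/-- The autopolar triangle covariant `G` vanishes identically. -/
def GVanishes (F G : RMat) : Prop := ∀ k, Gcovar F G k = 0

/-- The antisymmetric invariant `𝒜 = Φ₃₀Φ₁₂³ − Φ₀₃Φ₂₁³`. -/
def antisymInv (F G : RMat) : ℝ := ph F G 3 * (ph F G 1)^3 - ph F G 0 * (ph F G 2)^3

/-- Coefficients of `Q = Remainder(P·φ″, φ)`: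
`q₂ = 3p₁Φ₃₀ − 2p₂Φ₂₁`, `q₁ = 3p₀Φ₃₀ + p₁Φ₂₁ − 3p₂Φ₁₂`, `q₀ = p₀Φ₂₁ − 3p₂Φ₀₃`. -/
def qc2 (F G : RMat) : ℝ := 3 * pc F G 1 * ph F G 3 - 2 * pc F G 2 * ph F G 2
def qc1 (F G : RMat) : ℝ :=
  3 * pc F G 0 * ph F G 3 + pc F G 1 * ph F G 2 - 3 * pc F G 2 * ph F G 1
def qc0 (F G : RMat) : ℝ := pc F G 0 * ph F G 2 - 3 * pc F G 2 * ph F G 0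

/-- The subresultant coefficient `B₁ = sr₁(φ, Q)`. -/
def B1 (F G : RMat) : ℝ :=
  Matrix.det !![ph F G 3, ph F G 2, ph F G 1;
                0, qc2 F G, qc1 F G;
                qc2 F G, qc1 F G, qc0 F G]

/-- `R = 27Φ₃₀²Φ₀₃ + 2Φ₂₁³ − 6Φ₃₀Φ₂₁Φ₁₂ = Res(φ″,φ)/(8Φ₃₀)`. -/
def Rq (F G : RMat) : ℝ :=
  27 * (ph F G 3)^2 * ph F G 0 + 2 * (ph F G 2)^3 - 6 * ph F G 3 * ph F G 2 * ph F G 1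

/-- Action of a linear change of coordinates on quadratic forms: `f ∘ A` has matrix `Aᵀ F A`. -/
def transform (A : RMat) (M : RMat) : RMat := Aᵀ * M * A

/-- The pencil spanned by `[F], [G]` is the image, under a projective linear transformation,
of the pencil spanned by `[F₀], [G₀]`. -/
def PencilEquivTo (F G F₀ G₀ : RMat) : Prop :=
  ∃ A : GL (Fin 3) ℝ,
    Submodule.span ℝ ({transform (↑A) F₀, transform (↑A) G₀} : Set RMat) =
    Submodule.span ℝ ({F, G} : Set RMat)

/- Levy's representatives of the nine `PGL(3,ℝ)`-orbits of non-degenerate pencils of conics: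
orbit I: (x²−y², x²−z²); Ia: (x²+y²+z², xz); Ib: (x²+y²−z², xz); II: (yz, x(y−z));
IIa: (y²+z², xz); III: (xz, y²); IIIa: (x²+y², z²); IV: (xz−y², xy); V: (xz−y², x²). -/
def mXZ : RMat := !![0,0,1/2;0,0,0;1/2,0,0]
def levyI_f : RMat := !![1,0,0;0,-1,0;0,0,0]
def levyI_g : RMat := !![1,0,0;0,0,0;0,0,-1]
def levyIa_f : RMat := 1
def levyIa_g : RMat := mXZ
def levyIb_f : RMat := !![1,0,0;0,1,0;0,0,-1]
def levyIb_g : RMat := mXZ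
def levyII_f : RMat := !![0,0,0;0,0,1/2;0,1/2,0]
def levyII_g : RMat := !![0,1/2,-1/2;1/2,0,0;-1/2,0,0]
def levyIIa_f : RMat := !![0,0,0;0,1,0;0,0,1]
def levyIIa_g : RMat := mXZ
def levyIII_f : RMat := mXZ
def levyIII_g : RMat := !![0,0,0;0,1,0;0,0,0]
def levyIIIa_f : RMat := !![1,0,0;0,1,0;0,0,0]
def levyIIIa_g : RMat := !![0,0,0;0,0,0;0,0,1]
def levyIV_f : RMat := !![0,0,1/2;0,-1,0;1/2,0,0]
def levyIV_g : RMat := !![0,1/2,0;1/2,0,0;0,0,0]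
def levyV_f : RMat := !![0,0,1/2;0,-1,0;1/2,0,0]
def levyV_g : RMat := !![1,0,0;0,0,0;0,0,0]


variable {R : Type*} [CommRing R]

lemma charpoly_coeff_one_fin_three (M : Matrix (Fin 3) (Fin 3) R) :
    M.charpoly.coeff 1 = Matrix.trace (Matrix.adjugate M) := by
  have h : M.charpoly =
      X^3 - C (M 0 0 + M 1 1 + M 2 2) * X^2
      + C (M 0 0 * M 1 1 - M 0 1 * M 1 0 + M 0 0 * M 2 2 - M 0 2 * M 2 0
           + M 1 1 * M 2 2 - M 1 2 * M 2 1) * X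
      - C (M.det) := by
    rw [Matrix.charpoly, Matrix.det_fin_three, Matrix.det_fin_three]
    simp only [charmatrix_apply_eq, charmatrix_apply_ne _ _ _ (by decide : (0:Fin 3) ≠ 1),
      charmatrix_apply_ne _ _ _ (by decide : (0:Fin 3) ≠ 2),
      charmatrix_apply_ne _ _ _ (by decide : (1:Fin 3) ≠ 0),
      charmatrix_apply_ne _ _ _ (by decide : (1:Fin 3) ≠ 2),
      charmatrix_apply_ne _ _ _ (by decide : (2:Fin 3) ≠ 0),
      charmatrix_apply_ne _ _ _ (by decide : (2:Fin 3) ≠ 1),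
      map_add, _root_.map_mul, map_sub]
    ring
  rw [h, Matrix.adjugate_fin_three, Matrix.trace_fin_three]
  simp only [coeff_add, coeff_sub, coeff_neg, coeff_C_mul, coeff_X_pow, coeff_C,
    Matrix.cons_val', Matrix.cons_val_zero, Matrix.cons_val_one, Matrix.head_cons,
    Matrix.head_fin_const, Matrix.empty_val', Matrix.cons_val_fin_one, Matrix.of_apply]
  norm_num
  simp [Matrix.cons_val_two]
  ring


lemma modAux (a3 a2 a1 a0 s2 s1 s0 : ℝ) (h3 : a3 ≠ 0) :
    (C a3 * (C s2 * X^2 + C s1 * X + C s0)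
        * derivative (C a3 * X^3 + C a2 * X^2 + C a1 * X + C a0))
      % (C a3 * X^3 + C a2 * X^2 + C a1 * X + C a0)
    = C (a2^2*s2 - 2*a1*a3*s2 - a2*a3*s1 + 3*a3^2*s0) * X^2
      + C (a1*a2*s2 - 3*a0*a3*s2 - 2*a1*a3*s1 + 2*a2*a3*s0) * X
      + C (a0*a2*s2 - 3*a0*a3*s1 + a1*a3*s0) := by
  set φ : ℝ[X] := C a3 * X^3 + C a2 * X^2 + C a1 * X + C a0 with hφ
  have hlc : φ.leadingCoeff = a3 := by
    rw [hφ]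
    simpa using Polynomial.leadingCoeff_cubic h3
  have hφ0 : φ ≠ 0 := by
    intro h
    rw [h] at hlc
    exact h3 (by simpa using hlc.symm)
  have hdeg : φ.degree = 3 := by
    rw [hφ]; simpa using Polynomial.degree_cubic h3
  have hmonic : (φ * C (φ.leadingCoeff)⁻¹).Monic := monic_mul_leadingCoeff_inv hφ0
  set r : ℝ[X] := C (a2^2*s2 - 2*a1*a3*s2 - a2*a3*s1 + 3*a3^2*s0) * X^2
      + C (a1*a2*s2 - 3*a0*a3*s2 - 2*a1*a3*s1 + 2*a2*a3*s0) * X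
      + C (a0*a2*s2 - 3*a0*a3*s1 + a1*a3*s0) with hr
  set k : ℝ[X] := C (3*a3*s2) * X + C (3*a3*s1 - a2*s2) with hk
  have key : r + (φ * C (φ.leadingCoeff)⁻¹) * (C a3 * k)
      = C a3 * (C s2 * X^2 + C s1 * X + C s0) * derivative φ := by
    have h1 : φ * C (φ.leadingCoeff)⁻¹ * (C a3 * k) = φ * k := by
      rw [hlc, mul_assoc, ← mul_assoc (C a3⁻¹), ← _root_.map_mul, inv_mul_cancel₀ h3, Polynomial.C_1, one_mul]
    rw [h1, hφ, hr, hk]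
    simp only [derivative_add, derivative_mul, derivative_C, derivative_X_pow, derivative_X,
      zero_mul, zero_add, mul_one, map_sub, _root_.map_mul, map_add, map_pow, map_ofNat]
    push_cast
    simp only [map_ofNat]
    ring
  have hdegr : r.degree < (φ * C (φ.leadingCoeff)⁻¹).degree := by
    have hd2 : (φ * C (φ.leadingCoeff)⁻¹).degree = 3 := by
      rw [degree_mul, hdeg, degree_C (by rw [hlc]; exact inv_ne_zero h3)]
      rfl
    rw [hd2, hr]
    exact lt_of_le_of_lt (Polynomial.degree_quadratic_le) (by norm_num)
  have := (Polynomial.div_modByMonic_unique (C a3 * k) r hmonic ⟨key, hdegr⟩).2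
  rw [Polynomial.mod_def, this]

lemma pencil_decomp (A f g F G : RMat) (a b c e : ℝ)
    (hF : F = a • (Aᵀ*f*A) + b • (Aᵀ*g*A)) (hG : G = c • (Aᵀ*f*A) + e • (Aᵀ*g*A)) :
    pencilPolyMat F G = (A.map C)ᵀ
      * (Matrix.of fun i j => C (a*f i j + b*g i j) * X + C (c*f i j + e*g i j))
      * (A.map C) := by
  ext i j
  simp only [pencilPolyMat, Matrix.of_apply, hF, hG, Matrix.add_apply, Matrix.smul_apply,
    Matrix.mul_apply, Matrix.transpose_apply, Matrix.map_apply, smul_eq_mul,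
    Fin.sum_univ_three, map_add, _root_.map_mul]
  ring

lemma phi_decomp (A f g F G : RMat) (a b c e : ℝ)
    (hF : F = a • (Aᵀ*f*A) + b • (Aᵀ*g*A)) (hG : G = c • (Aᵀ*f*A) + e • (Aᵀ*g*A)) :
    phiP F G = C (A.det)
      * (Matrix.of fun i j => C (a*f i j + b*g i j) * X + C (c*f i j + e*g i j)).det
      * C (A.det) := by
  rw [phiP, pencil_decomp A f g F G a b c e hF hG, Matrix.det_mul, Matrix.det_mul,
    Matrix.det_transpose, ← RingHom.mapMatrix_apply, ← RingHom.map_det]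

set_option maxHeartbeats 1000000 in
lemma psi_decomp (A f g F G : RMat) (a b c e : ℝ)
    (hF : F = a • (Aᵀ*f*A) + b • (Aᵀ*g*A)) (hG : G = c • (Aᵀ*f*A) + e • (Aᵀ*g*A)) :
    psiP F G = Matrix.trace ((((Matrix.adjugate A)ᵀ * Matrix.adjugate A).map C)
      * Matrix.adjugate
        (Matrix.of fun i j => C (a*f i j + b*g i j) * X + C (c*f i j + e*g i j))) := by
  set Np : Matrix (Fin 3) (Fin 3) ℝ[X] :=
    Matrix.of fun i j => C (a*f i j + b*g i j) * X + C (c*f i j + e*g i j) with hNp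
  have hP : pencilPolyMat F G = (A.map C)ᵀ * Np * (A.map C) :=
    pencil_decomp A f g F G a b c e hF hG
  rw [psiP, hP, charpoly_coeff_one_fin_three, Matrix.adjugate_mul_distrib,
    Matrix.adjugate_mul_distrib]
  have h1 : Matrix.adjugate (A.map C) = (Matrix.adjugate A).map C := by
    rw [← RingHom.mapMatrix_apply, ← RingHom.mapMatrix_apply, RingHom.map_adjugate]
  have h2 : Matrix.adjugate ((A.map C)ᵀ) = ((Matrix.adjugate A).map C)ᵀ := by
    rw [← Matrix.adjugate_transpose, h1]
  rw [h1, h2, ← Matrix.mul_assoc, Matrix.trace_mul_cycle]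
  congr 1
  rw [Matrix.map_mul, ← Matrix.transpose_map]


lemma sandwich (A : GL (Fin 3) ℝ) (M : RMat) :
    ((↑(A⁻¹) : RMat))ᵀ * ((↑A : RMat)ᵀ * M * (↑A : RMat)) * (↑(A⁻¹) : RMat) = M := by
  have hu : (↑A : RMat) * (↑(A⁻¹) : RMat) = 1 := A.mul_inv
  calc ((↑(A⁻¹) : RMat))ᵀ * ((↑A : RMat)ᵀ * M * (↑A : RMat)) * (↑(A⁻¹) : RMat)
      = (((↑A : RMat) * (↑(A⁻¹) : RMat))ᵀ) * (M * ((↑A : RMat) * (↑(A⁻¹) : RMat))) := by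
        rw [Matrix.transpose_mul]
        simp only [Matrix.mul_assoc]
    _ = M := by rw [hu]; simp

lemma extract (A : GL (Fin 3) ℝ) (f g F G : RMat)
    (hsp : Submodule.span ℝ ({transform (↑A) f, transform (↑A) g} : Set RMat)
            = Submodule.span ℝ ({F, G} : Set RMat))
    (hind : ∀ x y : ℝ, x • f + y • g = 0 → x = 0 ∧ y = 0) :
    ∃ a b c e : ℝ, F = a • ((↑A : RMat)ᵀ*f*(↑A : RMat)) + b • ((↑A : RMat)ᵀ*g*(↑A : RMat))
      ∧ G = c • ((↑A : RMat)ᵀ*f*(↑A : RMat)) + e • ((↑A : RMat)ᵀ*g*(↑A : RMat))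
      ∧ a*e - b*c ≠ 0 := by
  have htf : transform (↑A : RMat) f = (↑A : RMat)ᵀ*f*↑A := rfl
  have htg : transform (↑A : RMat) g = (↑A : RMat)ᵀ*g*↑A := rfl
  set tf := transform (↑A : RMat) f
  set tg := transform (↑A : RMat) g
  have hindt : ∀ x y : ℝ, x • tf + y • tg = 0 → x = 0 ∧ y = 0 := by
    intro x y h
    apply hind x y
    rw [htf, htg] at h
    have h2 : (↑A : RMat)ᵀ * (x • f + y • g) * (↑A : RMat) = 0 := by
      calc (↑A : RMat)ᵀ * (x • f + y • g) * (↑A : RMat)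
          = x • ((↑A : RMat)ᵀ*f*(↑A : RMat)) + y • ((↑A : RMat)ᵀ*g*(↑A : RMat)) := by
            rw [Matrix.mul_add, Matrix.add_mul, Matrix.mul_smul, Matrix.mul_smul,
              Matrix.smul_mul, Matrix.smul_mul]
        _ = 0 := h
    have h3 := congrArg (fun M => ((↑(A⁻¹) : RMat))ᵀ * M * (↑(A⁻¹) : RMat)) h2
    simpa only [sandwich A (x • f + y • g), Matrix.mul_zero, Matrix.zero_mul] using h3
  have hFm : F ∈ Submodule.span ℝ ({tf, tg} : Set RMat) := by
    rw [hsp]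
    exact Submodule.subset_span (Set.mem_insert _ _)
  have hGm : G ∈ Submodule.span ℝ ({tf, tg} : Set RMat) := by
    rw [hsp]
    exact Submodule.subset_span (Set.mem_insert_of_mem _ rfl)
  have htfm : tf ∈ Submodule.span ℝ ({F, G} : Set RMat) := by
    rw [← hsp]
    exact Submodule.subset_span (Set.mem_insert _ _)
  have htgm : tg ∈ Submodule.span ℝ ({F, G} : Set RMat) := by
    rw [← hsp]
    exact Submodule.subset_span (Set.mem_insert_of_mem _ rfl)
  obtain ⟨a, b, hab⟩ := Submodule.mem_span_pair.mp hFm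
  obtain ⟨c, e, hce⟩ := Submodule.mem_span_pair.mp hGm
  obtain ⟨x, y, hxy⟩ := Submodule.mem_span_pair.mp htfm
  obtain ⟨z, w, hzw⟩ := Submodule.mem_span_pair.mp htgm
  rw [← hab, ← hce] at hxy hzw
  have h1 : (x*a + y*c - 1) • tf + (x*b + y*e) • tg = 0 := by
    have heq : (x*a + y*c - 1) • tf + (x*b + y*e) • tg
        = (x • (a • tf + b • tg) + y • (c • tf + e • tg)) - tf := by
      rw [smul_add, smul_add, smul_smul, smul_smul, smul_smul, smul_smul,
        sub_smul, one_smul, add_smul, add_smul]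
      abel
    rw [heq, hxy, sub_self]
  have h2 : (z*a + w*c) • tf + (z*b + w*e - 1) • tg = 0 := by
    have heq : (z*a + w*c) • tf + (z*b + w*e - 1) • tg
        = (z • (a • tf + b • tg) + w • (c • tf + e • tg)) - tg := by
      rw [smul_add, smul_add, smul_smul, smul_smul, smul_smul, smul_smul,
        sub_smul, one_smul, add_smul, add_smul]
      abel
    rw [heq, hzw, sub_self]
  obtain ⟨e1, e2⟩ := hindt _ _ h1
  obtain ⟨e3, e4⟩ := hindt _ _ h2
  have key : (x*w - y*z) * (a*e - b*c) = 1 := by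
    have e1' : x*a + y*c = 1 := by linarith
    have e4' : z*b + w*e = 1 := by linarith
    linear_combination (z*b + w*e) * e1' - (z*a + w*c) * e2 + e4'
  refine ⟨a, b, c, e, ?_, ?_, ?_⟩
  · rw [← hab, htf, htg]
  · rw [← hce, htf, htg]
  · intro h0
    rw [h0, mul_zero] at key
    exact zero_ne_one key

/-! Integer rescalings of the Levy representatives -/

def MfII : RMat := !![0,0,0;0,0,1;0,1,0]
def MgII : RMat := !![0,1,-1;1,0,0;-1,0,0]
def MgIIa : RMat := !![0,0,1;0,0,0;1,0,0]

lemma sqpos {x : ℝ} (h : x ≠ 0) : 0 < x^2 := by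
  have := mul_self_pos.mpr h; nlinarith

lemma comb_eq (A f g : RMat) (x y : ℝ) :
    x • (Aᵀ*f*A) + y • (Aᵀ*g*A) = Aᵀ*(x • f + y • g)*A := by
  rw [Matrix.mul_add, Matrix.add_mul, Matrix.mul_smul, Matrix.mul_smul,
    Matrix.smul_mul, Matrix.smul_mul]

lemma colsq0_pos (M : RMat) (h : M.det ≠ 0) : 0 < (Mᵀ*M) 0 0 := by
  have he : (Mᵀ*M) 0 0 = M 0 0^2 + M 1 0^2 + M 2 0^2 := by
    simp [Matrix.mul_apply, Fin.sum_univ_three]; ring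
  rw [he]
  by_contra hle
  push_neg at hle
  have h0 : M 0 0 = 0 := by nlinarith [sq_nonneg (M 0 0), sq_nonneg (M 1 0), sq_nonneg (M 2 0)]
  have h1 : M 1 0 = 0 := by nlinarith [sq_nonneg (M 0 0), sq_nonneg (M 1 0), sq_nonneg (M 2 0)]
  have h2 : M 2 0 = 0 := by nlinarith [sq_nonneg (M 0 0), sq_nonneg (M 1 0), sq_nonneg (M 2 0)]
  exact h (by rw [Matrix.det_fin_three, h0, h1, h2]; ring)

lemma colsq1_pos (M : RMat) (h : M.det ≠ 0) : 0 < (Mᵀ*M) 1 1 := by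
  have he : (Mᵀ*M) 1 1 = M 0 1^2 + M 1 1^2 + M 2 1^2 := by
    simp [Matrix.mul_apply, Fin.sum_univ_three]; ring
  rw [he]
  by_contra hle
  push_neg at hle
  have h0 : M 0 1 = 0 := by nlinarith [sq_nonneg (M 0 1), sq_nonneg (M 1 1), sq_nonneg (M 2 1)]
  have h1 : M 1 1 = 0 := by nlinarith [sq_nonneg (M 0 1), sq_nonneg (M 1 1), sq_nonneg (M 2 1)]
  have h2 : M 2 1 = 0 := by nlinarith [sq_nonneg (M 0 1), sq_nonneg (M 1 1), sq_nonneg (M 2 1)]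
  exact h (by rw [Matrix.det_fin_three, h0, h1, h2]; ring)

lemma col12_pos (M : RMat) (h : M.det ≠ 0) :
    0 < (Mᵀ*M) 1 1 + 2*((Mᵀ*M) 1 2) + (Mᵀ*M) 2 2 := by
  have he : (Mᵀ*M) 1 1 + 2*((Mᵀ*M) 1 2) + (Mᵀ*M) 2 2
      = (M 0 1 + M 0 2)^2 + (M 1 1 + M 1 2)^2 + (M 2 1 + M 2 2)^2 := by
    simp [Matrix.mul_apply, Fin.sum_univ_three]; ring
  rw [he]
  by_contra hle
  push_neg at hle
  have h0 : M 0 2 = -(M 0 1) := by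
    nlinarith [sq_nonneg (M 0 1 + M 0 2), sq_nonneg (M 1 1 + M 1 2), sq_nonneg (M 2 1 + M 2 2)]
  have h1 : M 1 2 = -(M 1 1) := by
    nlinarith [sq_nonneg (M 0 1 + M 0 2), sq_nonneg (M 1 1 + M 1 2), sq_nonneg (M 2 1 + M 2 2)]
  have h2 : M 2 2 = -(M 2 1) := by
    nlinarith [sq_nonneg (M 0 1 + M 0 2), sq_nonneg (M 1 1 + M 1 2), sq_nonneg (M 2 1 + M 2 2)]
  exact h (by rw [Matrix.det_fin_three, h0, h1, h2]; ring)

/-! Orbit II computations -/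

lemma phiII (A F G : RMat) (a b c e : ℝ)
    (hF : F = a • (Aᵀ*MfII*A) + b • (Aᵀ*MgII*A))
    (hG : G = c • (Aᵀ*MfII*A) + e • (Aᵀ*MgII*A)) :
    phiP F G
      = C (-(2*(A.det*A.det)*(a*b^2))) * X^3
      + C (-(2*(A.det*A.det)*(b^2*c + 2*(a*b*e)))) * X^2
      + C (-(2*(A.det*A.det)*(2*(b*c*e) + a*e^2))) * X
      + C (-(2*(A.det*A.det)*(c*e^2))) := by
  have hdet : (Matrix.of fun i j => C (a*MfII i j + b*MgII i j) * X
        + C (c*MfII i j + e*MgII i j)).det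
      = -2 * ((C a * X + C c) * ((C b * X + C e) * (C b * X + C e))) := by
    rw [Matrix.det_fin_three]
    simp [MfII, MgII, Matrix.vecHead, Matrix.vecTail, Function.comp,
      map_add, _root_.map_mul, map_neg, map_zero]
    ring
  rw [phi_decomp A MfII MgII F G a b c e hF hG, hdet]
  simp only [map_add, _root_.map_mul, map_neg, map_ofNat, map_pow]
  ring

lemma psiII (A F G : RMat) (a b c e B00 B01 B02 B11 B12 B22 : ℝ)
    (hF : F = a • (Aᵀ*MfII*A) + b • (Aᵀ*MgII*A))
    (hG : G = c • (Aᵀ*MfII*A) + e • (Aᵀ*MgII*A))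
    (hB : (Matrix.adjugate A)ᵀ * Matrix.adjugate A
          = !![B00,B01,B02;B01,B11,B12;B02,B12,B22]) :
    psiP F G
      = C (-(b^2*B22) - 2*(b^2*B12) - b^2*B11 + 2*(a*b*B02) - 2*(a*b*B01) - a^2*B00) * X^2
      + C (-(2*(b*e*B22)) - 4*(b*e*B12) - 2*(b*e*B11) + 2*(b*c*B02) - 2*(b*c*B01)
            + 2*(a*e*B02) - 2*(a*e*B01) - 2*(a*c*B00)) * X
      + C (-(e^2*B22) - 2*(e^2*B12) - e^2*B11 + 2*(c*e*B02) - 2*(c*e*B01) - c^2*B00) := by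
  rw [psi_decomp A MfII MgII F G a b c e hF hG, hB, Matrix.adjugate_fin_three,
    Matrix.trace_fin_three]
  simp [Matrix.mul_apply, Fin.sum_univ_three, Matrix.map_apply, MfII, MgII,
    Matrix.vecHead, Matrix.vecTail, Function.comp,
    map_add, _root_.map_mul, map_neg, map_zero, map_sub, map_pow, map_ofNat]
  ring

/-! Orbit IIa computations -/

lemma phiIIa (A F G : RMat) (a b c e : ℝ)
    (hF : F = a • (Aᵀ*levyIIa_f*A) + b • (Aᵀ*MgIIa*A))
    (hG : G = c • (Aᵀ*levyIIa_f*A) + e • (Aᵀ*MgIIa*A)) :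
    phiP F G
      = C (-((A.det*A.det)*(a*b^2))) * X^3
      + C (-((A.det*A.det)*(b^2*c + 2*(a*b*e)))) * X^2
      + C (-((A.det*A.det)*(2*(b*c*e) + a*e^2))) * X
      + C (-((A.det*A.det)*(c*e^2))) := by
  have hdet : (Matrix.of fun i j => C (a*levyIIa_f i j + b*MgIIa i j) * X
        + C (c*levyIIa_f i j + e*MgIIa i j)).det
      = -((C a * X + C c) * ((C b * X + C e) * (C b * X + C e))) := by
    rw [Matrix.det_fin_three]
    simp [levyIIa_f, MgIIa, Matrix.vecHead, Matrix.vecTail, Function.comp,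
      map_add, _root_.map_mul, map_neg, map_zero]
    ring
  rw [phi_decomp A levyIIa_f MgIIa F G a b c e hF hG, hdet]
  simp only [map_add, _root_.map_mul, map_neg, map_ofNat, map_pow]
  ring

lemma psiIIa (A F G : RMat) (a b c e B00 B01 B02 B11 B12 B22 : ℝ)
    (hF : F = a • (Aᵀ*levyIIa_f*A) + b • (Aᵀ*MgIIa*A))
    (hG : G = c • (Aᵀ*levyIIa_f*A) + e • (Aᵀ*MgIIa*A))
    (hB : (Matrix.adjugate A)ᵀ * Matrix.adjugate A
          = !![B00,B01,B02;B01,B11,B12;B02,B12,B22]) :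
    psiP F G
      = C (-(b^2*B11) - 2*(a*b*B02) + a^2*B00) * X^2
      + C (-(2*(b*e*B11)) - 2*(b*c*B02) - 2*(a*e*B02) + 2*(a*c*B00)) * X
      + C (-(e^2*B11) - 2*(c*e*B02) + c^2*B00) := by
  rw [psi_decomp A levyIIa_f MgIIa F G a b c e hF hG, hB, Matrix.adjugate_fin_three,
    Matrix.trace_fin_three]
  simp [Matrix.mul_apply, Fin.sum_univ_three, Matrix.map_apply, levyIIa_f, MgIIa,
    Matrix.vecHead, Matrix.vecTail, Function.comp,
    map_add, _root_.map_mul, map_neg, map_zero, map_sub, map_pow, map_ofNat]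
  ring

lemma A1_formula (F G : RMat) :
    A1 F G = ph F G 3 * (pc F G 2 * pc F G 0 - pc F G 1 * pc F G 1)
      - ph F G 2 * (0 * pc F G 0 - pc F G 1 * pc F G 2)
      + ph F G 1 * (0 * pc F G 1 - pc F G 2 * pc F G 2) := by
  unfold A1
  rw [Matrix.det_fin_three]
  simp [Matrix.vecHead, Matrix.vecTail, Function.comp]
  ring

set_option maxHeartbeats 2000000 in
lemma mainII (A : GL (Fin 3) ℝ) (F G : RMat) (a b c e : ℝ)
    (hF : F = a • ((↑A : RMat)ᵀ*MfII*(↑A : RMat)) + b • ((↑A : RMat)ᵀ*MgII*(↑A : RMat)))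
    (hG : G = c • ((↑A : RMat)ᵀ*MfII*(↑A : RMat)) + e • ((↑A : RMat)ᵀ*MgII*(↑A : RMat)))
    (hne : a*e - b*c ≠ 0) (hdF : F.det ≠ 0) :
    pc F G 2 < 0 ∧ 0 < ph F G 3 * A1 F G := by
  set M : RMat := ↑A with hM
  have hdetA : M.det ≠ 0 := by
    have : IsUnit M := ⟨A, rfl⟩
    exact ((Matrix.isUnit_iff_isUnit_det M).mp this).ne_zero
  -- a, b ≠ 0 from nondegeneracy of F
  have hdetF : F.det = M.det * (-(2*(a*b^2))) * M.det := by
    have hmid : (a • MfII + b • MgII).det = -(2*(a*b^2)) := by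
      rw [Matrix.det_fin_three]
      simp [MfII, MgII, Matrix.vecHead, Matrix.vecTail, Function.comp]
      ring
    rw [hF, comb_eq, Matrix.det_mul, Matrix.det_mul, Matrix.det_transpose, hmid]
  have ha : a ≠ 0 := by
    intro h; exact hdF (by rw [hdetF, h]; ring)
  have hb : b ≠ 0 := by
    intro h; exact hdF (by rw [hdetF, h]; ring)
  -- the positive-definite matrix B
  set Cc : RMat := Matrix.adjugate M with hCc
  have hdetCc : Cc.det ≠ 0 := by
    rw [hCc, Matrix.det_adjugate]
    simpa using pow_ne_zero 2 hdetA
  set Bm : RMat := Ccᵀ * Cc with hBm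
  have hsym10 : Bm 1 0 = Bm 0 1 := by
    simp [hBm, Matrix.mul_apply, Fin.sum_univ_three]; ring
  have hsym20 : Bm 2 0 = Bm 0 2 := by
    simp [hBm, Matrix.mul_apply, Fin.sum_univ_three]; ring
  have hsym21 : Bm 2 1 = Bm 1 2 := by
    simp [hBm, Matrix.mul_apply, Fin.sum_univ_three]; ring
  have hB : Ccᵀ * Cc
      = !![Bm 0 0, Bm 0 1, Bm 0 2; Bm 0 1, Bm 1 1, Bm 1 2; Bm 0 2, Bm 1 2, Bm 2 2] := by
    have h0 := Matrix.eta_fin_three Bm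
    rw [hsym10, hsym20, hsym21] at h0
    rw [← hBm]; exact h0
  have hB00 : 0 < Bm 0 0 := colsq0_pos Cc hdetCc
  have hV : 0 < Bm 1 1 + 2*(Bm 1 2) + Bm 2 2 := col12_pos Cc hdetCc
  -- coefficients of φ and ψ
  have hphi := phiII M F G a b c e hF hG
  have hpsi := psiII M F G a b c e (Bm 0 0) (Bm 0 1) (Bm 0 2) (Bm 1 1) (Bm 1 2) (Bm 2 2) hF hG hB
  have hph3 : ph F G 3 = -(2*(M.det*M.det)*(a*b^2)) := by
    unfold ph; rw [hphi]
    simp only [coeff_add, coeff_C_mul, coeff_X_pow, coeff_X, coeff_C]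
    norm_num
  have hph2 : ph F G 2 = -(2*(M.det*M.det)*(b^2*c + 2*(a*b*e))) := by
    unfold ph; rw [hphi]
    simp only [coeff_add, coeff_C_mul, coeff_X_pow, coeff_X, coeff_C]
    norm_num
  have hph1 : ph F G 1 = -(2*(M.det*M.det)*(2*(b*c*e) + a*e^2)) := by
    unfold ph; rw [hphi]
    simp only [coeff_add, coeff_C_mul, coeff_X_pow, coeff_X, coeff_C]
    norm_num
  have h3 : -(2*(M.det*M.det)*(a*b^2)) ≠ 0 := by
    refine neg_ne_zero.mpr (mul_ne_zero (mul_ne_zero two_ne_zero ?_) (mul_ne_zero ha ?_))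
    · exact mul_ne_zero hdetA hdetA
    · exact pow_ne_zero 2 hb
  set k3 : ℝ := -(2*(M.det*M.det)*(a*b^2)) with hk3
  set k2 : ℝ := -(2*(M.det*M.det)*(b^2*c + 2*(a*b*e))) with hk2
  set k1 : ℝ := -(2*(M.det*M.det)*(2*(b*c*e) + a*e^2)) with hk1
  set k0 : ℝ := -(2*(M.det*M.det)*(c*e^2)) with hk0
  set s2 : ℝ := -(b^2*(Bm 2 2)) - 2*(b^2*(Bm 1 2)) - b^2*(Bm 1 1) + 2*(a*b*(Bm 0 2))
      - 2*(a*b*(Bm 0 1)) - a^2*(Bm 0 0) with hs2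
  set s1 : ℝ := -(2*(b*e*(Bm 2 2))) - 4*(b*e*(Bm 1 2)) - 2*(b*e*(Bm 1 1)) + 2*(b*c*(Bm 0 2))
      - 2*(b*c*(Bm 0 1)) + 2*(a*e*(Bm 0 2)) - 2*(a*e*(Bm 0 1)) - 2*(a*c*(Bm 0 0)) with hs1
  set s0 : ℝ := -(e^2*(Bm 2 2)) - 2*(e^2*(Bm 1 2)) - e^2*(Bm 1 1) + 2*(c*e*(Bm 0 2))
      - 2*(c*e*(Bm 0 1)) - c^2*(Bm 0 0) with hs0
  have hPrem : Prem F G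
      = C (k2^2*s2 - 2*k1*k3*s2 - k2*k3*s1 + 3*k3^2*s0) * X^2
      + C (k1*k2*s2 - 3*k0*k3*s2 - 2*k1*k3*s1 + 2*k2*k3*s0) * X
      + C (k0*k2*s2 - 3*k0*k3*s1 + k1*k3*s0) := by
    unfold Prem
    rw [hph3, hphi, hpsi]
    exact modAux k3 k2 k1 k0 s2 s1 s0 h3
  have hpc2 : pc F G 2 = k2^2*s2 - 2*k1*k3*s2 - k2*k3*s1 + 3*k3^2*s0 := by
    unfold pc; rw [hPrem]
    simp only [coeff_add, coeff_C_mul, coeff_X_pow, coeff_X, coeff_C]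
    norm_num
  have hpc1 : pc F G 1 = k1*k2*s2 - 3*k0*k3*s2 - 2*k1*k3*s1 + 2*k2*k3*s0 := by
    unfold pc; rw [hPrem]
    simp only [coeff_add, coeff_C_mul, coeff_X_pow, coeff_X, coeff_C]
    norm_num
  have hpc0 : pc F G 0 = k0*k2*s2 - 3*k0*k3*s1 + k1*k3*s0 := by
    unfold pc; rw [hPrem]
    simp only [coeff_add, coeff_C_mul, coeff_X_pow, coeff_X, coeff_C]
    norm_num
  -- positivity ingredients
  have hbc : b*c - a*e ≠ 0 := by intro h; apply hne; linarith
  have hDD : 0 < M.det*M.det := mul_self_pos.mpr hdetA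
  have ha2 : 0 < a^2 := sqpos ha
  have hb2 : 0 < b^2 := sqpos hb
  have hs2' : 0 < (b*c - a*e)^2 := sqpos hbc
  constructor
  · -- p₂ < 0
    have hfact : pc F G 2
        = -(4*(((M.det*M.det)^2 * (b^2 * (b*c-a*e)^2))
            * (b^2*(Bm 1 1 + 2*(Bm 1 2) + Bm 2 2) + 2*(a^2*(Bm 0 0))))) := by
      rw [hpc2, hk2, hk1, hk3, hs2, hs1, hs0]; ring
    rw [hfact]
    have hpos : 0 < 4*(((M.det*M.det)^2 * (b^2 * (b*c-a*e)^2))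
        * (b^2*(Bm 1 1 + 2*(Bm 1 2) + Bm 2 2) + 2*(a^2*(Bm 0 0)))) := by
      apply mul_pos (by norm_num)
      apply mul_pos (mul_pos (pow_pos hDD 2) (mul_pos hb2 hs2'))
      have h1 : 0 < b^2*(Bm 1 1 + 2*(Bm 1 2) + Bm 2 2) := mul_pos hb2 hV
      have h2 : 0 < 2*(a^2*(Bm 0 0)) := by positivity
      linarith
    linarith
  · -- Φ₃₀ A₁ > 0
    have hKey : ph F G 3 * A1 F G
        = 128*((M.det*M.det)^6 * (a^2 * ((b^2)^4 * (((b*c-a*e)^2)^3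
            * ((Bm 0 0) * (Bm 1 1 + 2*(Bm 1 2) + Bm 2 2)))))) := by
      rw [A1_formula, hph3, hph2, hph1, hpc2, hpc1, hpc0, hk3, hk2, hk1, hk0, hs2, hs1, hs0]
      ring
    rw [hKey]
    apply mul_pos (by norm_num)
    apply mul_pos (pow_pos hDD 6)
    apply mul_pos ha2
    apply mul_pos (pow_pos hb2 4)
    apply mul_pos (pow_pos hs2' 3)
    exact mul_pos hB00 hV

set_option maxHeartbeats 2000000 in
lemma mainIIa (A : GL (Fin 3) ℝ) (F G : RMat) (a b c e : ℝ)
    (hF : F = a • ((↑A : RMat)ᵀ*levyIIa_f*(↑A : RMat)) + b • ((↑A : RMat)ᵀ*MgIIa*(↑A : RMat)))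
    (hG : G = c • ((↑A : RMat)ᵀ*levyIIa_f*(↑A : RMat)) + e • ((↑A : RMat)ᵀ*MgIIa*(↑A : RMat)))
    (hne : a*e - b*c ≠ 0) (hdF : F.det ≠ 0) :
    ph F G 3 * A1 F G < 0 := by
  set M : RMat := ↑A with hM
  have hdetA : M.det ≠ 0 := by
    have : IsUnit M := ⟨A, rfl⟩
    exact ((Matrix.isUnit_iff_isUnit_det M).mp this).ne_zero
  have hdetF : F.det = M.det * (-(a*b^2)) * M.det := by
    have hmid : (a • levyIIa_f + b • MgIIa).det = -(a*b^2) := by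
      rw [Matrix.det_fin_three]
      simp [levyIIa_f, MgIIa, Matrix.vecHead, Matrix.vecTail, Function.comp]
      ring
    rw [hF, comb_eq, Matrix.det_mul, Matrix.det_mul, Matrix.det_transpose, hmid]
  have ha : a ≠ 0 := by
    intro h; exact hdF (by rw [hdetF, h]; ring)
  have hb : b ≠ 0 := by
    intro h; exact hdF (by rw [hdetF, h]; ring)
  set Cc : RMat := Matrix.adjugate M with hCc
  have hdetCc : Cc.det ≠ 0 := by
    rw [hCc, Matrix.det_adjugate]
    simpa using pow_ne_zero 2 hdetA
  set Bm : RMat := Ccᵀ * Cc with hBm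
  have hsym10 : Bm 1 0 = Bm 0 1 := by
    simp [hBm, Matrix.mul_apply, Fin.sum_univ_three]; ring
  have hsym20 : Bm 2 0 = Bm 0 2 := by
    simp [hBm, Matrix.mul_apply, Fin.sum_univ_three]; ring
  have hsym21 : Bm 2 1 = Bm 1 2 := by
    simp [hBm, Matrix.mul_apply, Fin.sum_univ_three]; ring
  have hB : Ccᵀ * Cc
      = !![Bm 0 0, Bm 0 1, Bm 0 2; Bm 0 1, Bm 1 1, Bm 1 2; Bm 0 2, Bm 1 2, Bm 2 2] := by
    have h0 := Matrix.eta_fin_three Bm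
    rw [hsym10, hsym20, hsym21] at h0
    rw [← hBm]; exact h0
  have hB00 : 0 < Bm 0 0 := colsq0_pos Cc hdetCc
  have hB11 : 0 < Bm 1 1 := colsq1_pos Cc hdetCc
  have hphi := phiIIa M F G a b c e hF hG
  have hpsi := psiIIa M F G a b c e (Bm 0 0) (Bm 0 1) (Bm 0 2) (Bm 1 1) (Bm 1 2) (Bm 2 2) hF hG hB
  have hph3 : ph F G 3 = -((M.det*M.det)*(a*b^2)) := by
    unfold ph; rw [hphi]
    simp only [coeff_add, coeff_C_mul, coeff_X_pow, coeff_X, coeff_C]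
    norm_num
  have hph2 : ph F G 2 = -((M.det*M.det)*(b^2*c + 2*(a*b*e))) := by
    unfold ph; rw [hphi]
    simp only [coeff_add, coeff_C_mul, coeff_X_pow, coeff_X, coeff_C]
    norm_num
  have hph1 : ph F G 1 = -((M.det*M.det)*(2*(b*c*e) + a*e^2)) := by
    unfold ph; rw [hphi]
    simp only [coeff_add, coeff_C_mul, coeff_X_pow, coeff_X, coeff_C]
    norm_num
  have h3 : -((M.det*M.det)*(a*b^2)) ≠ 0 := by
    refine neg_ne_zero.mpr (mul_ne_zero ?_ (mul_ne_zero ha ?_))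
    · exact mul_ne_zero hdetA hdetA
    · exact pow_ne_zero 2 hb
  set k3 : ℝ := -((M.det*M.det)*(a*b^2)) with hk3
  set k2 : ℝ := -((M.det*M.det)*(b^2*c + 2*(a*b*e))) with hk2
  set k1 : ℝ := -((M.det*M.det)*(2*(b*c*e) + a*e^2)) with hk1
  set k0 : ℝ := -((M.det*M.det)*(c*e^2)) with hk0
  set s2 : ℝ := -(b^2*(Bm 1 1)) - 2*(a*b*(Bm 0 2)) + a^2*(Bm 0 0) with hs2
  set s1 : ℝ := -(2*(b*e*(Bm 1 1))) - 2*(b*c*(Bm 0 2)) - 2*(a*e*(Bm 0 2)) + 2*(a*c*(Bm 0 0))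
    with hs1
  set s0 : ℝ := -(e^2*(Bm 1 1)) - 2*(c*e*(Bm 0 2)) + c^2*(Bm 0 0) with hs0
  have hPrem : Prem F G
      = C (k2^2*s2 - 2*k1*k3*s2 - k2*k3*s1 + 3*k3^2*s0) * X^2
      + C (k1*k2*s2 - 3*k0*k3*s2 - 2*k1*k3*s1 + 2*k2*k3*s0) * X
      + C (k0*k2*s2 - 3*k0*k3*s1 + k1*k3*s0) := by
    unfold Prem
    rw [hph3, hphi, hpsi]
    exact modAux k3 k2 k1 k0 s2 s1 s0 h3
  have hpc2 : pc F G 2 = k2^2*s2 - 2*k1*k3*s2 - k2*k3*s1 + 3*k3^2*s0 := by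
    unfold pc; rw [hPrem]
    simp only [coeff_add, coeff_C_mul, coeff_X_pow, coeff_X, coeff_C]
    norm_num
  have hpc1 : pc F G 1 = k1*k2*s2 - 3*k0*k3*s2 - 2*k1*k3*s1 + 2*k2*k3*s0 := by
    unfold pc; rw [hPrem]
    simp only [coeff_add, coeff_C_mul, coeff_X_pow, coeff_X, coeff_C]
    norm_num
  have hpc0 : pc F G 0 = k0*k2*s2 - 3*k0*k3*s1 + k1*k3*s0 := by
    unfold pc; rw [hPrem]
    simp only [coeff_add, coeff_C_mul, coeff_X_pow, coeff_X, coeff_C]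
    norm_num
  have hbc : b*c - a*e ≠ 0 := by intro h; apply hne; linarith
  have hDD : 0 < M.det*M.det := mul_self_pos.mpr hdetA
  have hKey : ph F G 3 * A1 F G
      = -(2*((M.det*M.det)^6 * (a^2 * ((b^2)^4 * (((b*c-a*e)^2)^3
          * ((Bm 0 0) * (Bm 1 1))))))) := by
    rw [A1_formula, hph3, hph2, hph1, hpc2, hpc1, hpc0, hk3, hk2, hk1, hk0, hs2, hs1, hs0]
    ring
  rw [hKey]
  have hpos : 0 < 2*((M.det*M.det)^6 * (a^2 * ((b^2)^4 * (((b*c-a*e)^2)^3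
      * ((Bm 0 0) * (Bm 1 1)))))) := by
    apply mul_pos (by norm_num)
    apply mul_pos (pow_pos hDD 6)
    apply mul_pos (sqpos ha)
    apply mul_pos (pow_pos (sqpos hb) 4)
    apply mul_pos (pow_pos (sqpos hbc) 3)
    exact mul_pos hB00 hB11
  linarith

lemma indII : ∀ x y : ℝ, x • levyII_f + y • levyII_g = 0 → x = 0 ∧ y = 0 := by
  intro x y h
  have h12 := congrFun (congrFun h 1) 2
  have h01 := congrFun (congrFun h 0) 1
  simp [levyII_f, levyII_g, Matrix.add_apply, Matrix.smul_apply, smul_eq_mul] at h12 h01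
  exact ⟨h12, h01⟩

lemma indIIa : ∀ x y : ℝ, x • levyIIa_f + y • levyIIa_g = 0 → x = 0 ∧ y = 0 := by
  intro x y h
  have h11 := congrFun (congrFun h 1) 1
  have h02 := congrFun (congrFun h 0) 2
  simp [levyIIa_f, levyIIa_g, mXZ, Matrix.add_apply, Matrix.smul_apply, smul_eq_mul] at h11 h02
  exact ⟨h11, h02⟩

lemma halfII_f : levyII_f = (2⁻¹ : ℝ) • MfII := by
  ext i j
  fin_cases i <;> fin_cases j <;> simp [levyII_f, MfII, Matrix.vecHead, Matrix.vecTail, Function.comp] <;> norm_num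

lemma halfII_g : levyII_g = (2⁻¹ : ℝ) • MgII := by
  ext i j
  fin_cases i <;> fin_cases j <;> simp [levyII_g, MgII, Matrix.vecHead, Matrix.vecTail, Function.comp] <;> norm_num

lemma halfIIa_g : levyIIa_g = (2⁻¹ : ℝ) • MgIIa := by
  ext i j
  fin_cases i <;> fin_cases j <;> simp [levyIIa_g, mXZ, MgIIa, Matrix.vecHead, Matrix.vecTail, Function.comp] <;> norm_num



/-- **Proposition.** Discrimination between orbits II and IIa. -/
theorem discrimination_II_vs_IIa (F G : RMat)
    (hF : F.IsSymm) (hG : G.IsSymm) (hdF : F.det ≠ 0) (hdG : G.det ≠ 0) :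
    (PencilEquivTo F G levyII_f levyII_g → pc F G 2 < 0 ∧ 0 < ph F G 3 * A1 F G) ∧
    (PencilEquivTo F G levyIIa_f levyIIa_g →
      pc F G 2 = 0 ∨ ph F G 3 * A1 F G < 0) := by
  constructor
  · rintro ⟨A, hsp⟩
    obtain ⟨a, b, c, e, hF0, hG0, hne⟩ := extract A levyII_f levyII_g F G hsp indII
    have hf : (↑A : RMat)ᵀ*levyII_f*(↑A : RMat)
        = (2⁻¹ : ℝ) • ((↑A : RMat)ᵀ*MfII*(↑A : RMat)) := by
      rw [halfII_f, Matrix.mul_smul, Matrix.smul_mul]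
    have hg : (↑A : RMat)ᵀ*levyII_g*(↑A : RMat)
        = (2⁻¹ : ℝ) • ((↑A : RMat)ᵀ*MgII*(↑A : RMat)) := by
      rw [halfII_g, Matrix.mul_smul, Matrix.smul_mul]
    have hF1 : F = (a*2⁻¹) • ((↑A : RMat)ᵀ*MfII*(↑A : RMat))
        + (b*2⁻¹) • ((↑A : RMat)ᵀ*MgII*(↑A : RMat)) := by
      rw [hF0, hf, hg, smul_smul, smul_smul]
    have hG1 : G = (c*2⁻¹) • ((↑A : RMat)ᵀ*MfII*(↑A : RMat))
        + (e*2⁻¹) • ((↑A : RMat)ᵀ*MgII*(↑A : RMat)) := by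
      rw [hG0, hf, hg, smul_smul, smul_smul]
    have hne1 : (a*2⁻¹)*(e*2⁻¹) - (b*2⁻¹)*(c*2⁻¹) ≠ 0 := by
      intro h; apply hne; linear_combination 4*h
    exact mainII A F G (a*2⁻¹) (b*2⁻¹) (c*2⁻¹) (e*2⁻¹) hF1 hG1 hne1 hdF
  · rintro ⟨A, hsp⟩
    obtain ⟨a, b, c, e, hF0, hG0, hne⟩ := extract A levyIIa_f levyIIa_g F G hsp indIIa
    have hg : (↑A : RMat)ᵀ*levyIIa_g*(↑A : RMat)
        = (2⁻¹ : ℝ) • ((↑A : RMat)ᵀ*MgIIa*(↑A : RMat)) := by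
      rw [halfIIa_g, Matrix.mul_smul, Matrix.smul_mul]
    have hF1 : F = a • ((↑A : RMat)ᵀ*levyIIa_f*(↑A : RMat))
        + (b*2⁻¹) • ((↑A : RMat)ᵀ*MgIIa*(↑A : RMat)) := by
      rw [hF0, hg, smul_smul]
    have hG1 : G = c • ((↑A : RMat)ᵀ*levyIIa_f*(↑A : RMat))
        + (e*2⁻¹) • ((↑A : RMat)ᵀ*MgIIa*(↑A : RMat)) := by
      rw [hG0, hg, smul_smul]
    have hne1 : a*(e*2⁻¹) - (b*2⁻¹)*c ≠ 0 := by
      intro h; apply hne; linear_combination 2*h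
    exact Or.inr (mainIIa A F G a (b*2⁻¹) c (e*2⁻¹) hF1 hG1 hne1 hdF)
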